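/- Let O and R be disjoint nonempty finite index sets of cardinalities n_o and n_r, with real outcomes Y_it, Y_ic and probabilities p_i ∈ (0,1) for i ∈ O, and probabilities p_i = p_r ∈ (0,1), constant, for i ∈ R. Write μ_ot = (1/n_o)Σ_{i∈O} Y_it, μ_oc = (1/n_o)Σ_{i∈O} Y_ic, μ_rt = (1/n_r)Σ_{i∈R} Y_it, μ_rc = (1/n_r)Σ_{i∈R} Y_ic, p_ot = (1/n_o)Σ_{i∈O} p_i, p_oc = 1 − p_ot, p_rt = p_r, p_rc = 1 − p_r, s_ot = (1/n_o)Σ_{i∈O} Y_it·p_i − μ_ot·p_ot, s_oc = (1/n_o)Σ_{i∈O} Y_ic·(1−p_i) − μ_oc·p_oc. Assume μ_ot − μ_rt = μ_oc − μ_rc, and call this common value Δ. For the pooled set S = O ∪ R of cardinality n = n_o + n_r define μ_t, μ_c, p_t, p_c, s_t, s_c by the same formulas over S. Then (μ_t − μ_c) + (s_t/p_t − s_c/p_c) − (μ_rt − μ_rc) = Δ·n_o·( p_ot/(n_o·p_ot + n_r·p_rt) − p_oc/(n_o·p_oc + n_r·p_rc) ) + s_ot·n_o/(n_o·p_ot +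 n_r·p_rt) − s_oc·n_o/(n_o·p_oc + n_r·p_rc). -/

import Mathlib

set_option maxHeartbeats 1000000


/-- Equation (spiked-in bias, exact form): with constant probability `p_r` on `R`
and mean-difference `Δ = μ_ot − μ_rt = μ_oc − μ_rc`, the leading delta-method bias
of the pooled (spiked-in) estimator on `S = O ∪ R` relative to `τ = μ_rt − μ_rc` is
`Δ·n_o·(p_ot/(n_o p_ot + n_r p_rt) − p_oc/(n_o p_oc + n_r p_rc))
  + s_ot·n_o/(n_o p_ot + n_r p_rt) − s_oc·n_o/(n_o p_oc + n_r p_rc)`. -/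
theorem spiked_in_bias_identity
    {ι : Type*} [DecidableEq ι] (O R : Finset ι)
    (hO : O.Nonempty) (hR : R.Nonempty) (hdisj : Disjoint O R)
    (Yt Yc p : ι → ℝ) (pr : ℝ) (hpr : pr ∈ Set.Ioo (0 : ℝ) 1)
    (hpO : ∀ i ∈ O, p i ∈ Set.Ioo (0 : ℝ) 1)
    (hpR : ∀ i ∈ R, p i = pr)
    (no nr μot μoc μrt μrc pot poc prt prc sot soc Δ : ℝ)
    (hno : no = (O.card : ℝ)) (hnr : nr = (R.card : ℝ))
    (hμot : μot = (1 / no) * ∑ i ∈ O, Yt i)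
    (hμoc : μoc = (1 / no) * ∑ i ∈ O, Yc i)
    (hμrt : μrt = (1 / nr) * ∑ i ∈ R, Yt i)
    (hμrc : μrc = (1 / nr) * ∑ i ∈ R, Yc i)
    (hpot : pot = (1 / no) * ∑ i ∈ O, p i)
    (hpoc : poc = 1 - pot)
    (hprt : prt = pr)
    (hprc : prc = 1 - pr)
    (hsot : sot = (1 / no) * (∑ i ∈ O, Yt i * p i) - μot * pot)
    (hsoc : soc = (1 / no) * (∑ i ∈ O, Yc i * (1 - p i)) - μoc * poc)
    (hΔt : μot - μrt = Δ) (hΔc : μoc - μrc = Δ)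
    (n μt μc pt pc st sc : ℝ)
    (hn : n = ((O ∪ R).card : ℝ))
    (hμt : μt = (1 / n) * ∑ i ∈ O ∪ R, Yt i)
    (hμc : μc = (1 / n) * ∑ i ∈ O ∪ R, Yc i)
    (hpt : pt = (1 / n) * ∑ i ∈ O ∪ R, p i)
    (hpc : pc = 1 - pt)
    (hst : st = (1 / n) * (∑ i ∈ O ∪ R, Yt i * p i) - μt * pt)
    (hsc : sc = (1 / n) * (∑ i ∈ O ∪ R, Yc i * (1 - p i)) - μc * pc) :
    (μt - μc) + (st / pt - sc / pc) - (μrt - μrc)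
      = Δ * no * (pot / (no * pot + nr * prt) - poc / (no * poc + nr * prc))
        + sot * no / (no * pot + nr * prt)
        - soc * no / (no * poc + nr * prc) := by
  have hO0 : (0:ℝ) < no := by rw [hno]; exact_mod_cast Finset.card_pos.mpr hO
  have hR0 : (0:ℝ) < nr := by rw [hnr]; exact_mod_cast Finset.card_pos.mpr hR
  have hno' : no ≠ 0 := ne_of_gt hO0
  have hnr' : nr ≠ 0 := ne_of_gt hR0
  have hnun : n = no + nr := by
    rw [hn, hno, hnr, Finset.card_union_of_disjoint hdisj]; push_cast; ring
  have hn2 : no + nr ≠ 0 := by positivity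
  -- sums over O in terms of the defined quantities
  have hA : ∑ i ∈ O, Yt i = no * μot := by rw [hμot]; field_simp
  have hB : ∑ i ∈ O, Yc i = no * μoc := by rw [hμoc]; field_simp
  have hP : ∑ i ∈ O, p i = no * pot := by rw [hpot]; field_simp
  have hE : ∑ i ∈ O, Yt i * p i = no * (sot + μot * pot) := by
    rw [hsot]; field_simp; ring
  have hF : ∑ i ∈ O, Yc i * (1 - p i) = no * (soc + μoc * poc) := by
    rw [hsoc]; field_simp; ring
  -- sums over R
  have hμrt' : μrt = μot - Δ := by linarith
  have hμrc' : μrc = μoc - Δ := by linarith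
  have hCt : ∑ i ∈ R, Yt i = nr * (μot - Δ) := by
    rw [← hμrt', hμrt]; field_simp
  have hCc : ∑ i ∈ R, Yc i = nr * (μoc - Δ) := by
    rw [← hμrc', hμrc]; field_simp
  have hPr : ∑ i ∈ R, p i = nr * pr := by
    rw [Finset.sum_congr rfl hpR, Finset.sum_const, hnr]; ring
  have hEr : ∑ i ∈ R, Yt i * p i = pr * (nr * (μot - Δ)) := by
    rw [← hCt, Finset.mul_sum]
    refine Finset.sum_congr rfl fun i hi => ?_
    rw [hpR i hi]; ring
  have hFr : ∑ i ∈ R, Yc i * (1 - p i) = (1 - pr) * (nr * (μoc - Δ)) := by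
    rw [← hCc, Finset.mul_sum]
    refine Finset.sum_congr rfl fun i hi => ?_
    rw [hpR i hi]; ring
  -- positivity of probabilities
  have hPpos : 0 < ∑ i ∈ O, p i :=
    Finset.sum_pos (fun i hi => (hpO i hi).1) hO
  have hPlt : ∑ i ∈ O, p i < no := by
    rw [hno]
    calc ∑ i ∈ O, p i < ∑ i ∈ O, 1 :=
          Finset.sum_lt_sum_of_nonempty hO (fun i hi => (hpO i hi).2)
      _ = (O.card : ℝ) := by simp
  have hpotpos : 0 < pot := by
    rw [hpot]; have := hPpos; positivity
  have hpotlt : pot < 1 := by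
    rw [hpot, one_div, inv_mul_eq_div, div_lt_one hO0]; exact hPlt
  have hK : no * pot + nr * pr ≠ 0 := by
    have h1 := mul_pos hO0 hpotpos
    have h2 := mul_pos hR0 hpr.1
    exact ne_of_gt (by linarith)
  have hL : no * (1 - pot) + nr * (1 - pr) ≠ 0 := by
    have h1 := mul_pos hO0 (by linarith : (0:ℝ) < 1 - pot)
    have h2 := mul_pos hR0 (by linarith [hpr.2] : (0:ℝ) < 1 - pr)
    exact ne_of_gt (by linarith)
  have hnpt : pt = (no * pot + nr * pr) / n := by
    rw [hpt, Finset.sum_union hdisj, hP, hPr]; ring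
  have hnpc : pc = (no * (1 - pot) + nr * (1 - pr)) / n := by
    rw [hpc, hnpt, hnun]; field_simp; ring
  have hstpt : st / pt
      = (no * (sot + μot * pot) + pr * (nr * (μot - Δ))) / (no * pot + nr * pr) - μt := by
    rw [hst, Finset.sum_union hdisj, hE, hEr, hnpt, hnun]
    field_simp
  have hscpc : sc / pc
      = (no * (soc + μoc * poc) + (1 - pr) * (nr * (μoc - Δ)))
          / (no * (1 - pot) + nr * (1 - pr)) - μc := by
    rw [hsc, Finset.sum_union hdisj, hF, hFr, hnpc, hnun]
    field_simp
  rw [hstpt, hscpc, hμrt', hμrc', hprt, hprc, hpoc]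
  have eK := mul_inv_cancel₀ hK
  have eL := mul_inv_cancel₀ hL
  linear_combination (μot - Δ) * eK - (μoc - Δ) * eL
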